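/- For the witness operator W_N = (1/2)I − |G_N⟩⟨G_N| with |G_N⟩ = (|0…0⟩ + |1…1⟩)/√2, every product state σ = σ_A ⊗ σ_B satisfies Tr(W_N σ) ≥ 0. -/

import Mathlib

open Matrix Kronecker BigOperators
open scoped ComplexOrder

noncomputable section

/-- A density matrix: positive semidefinite with unit trace. -/
def IsDensity {n : Type*} [Fintype n] (ρ : Matrix n n ℂ) : Prop :=
  ρ.PosSemidef ∧ ρ.trace = 1

/-- A measurement operator `M` with `0 ≤ M ≤ I`. -/
def IsMeas {n : Type*} [Fintype n] [DecidableEq n] (M : Matrix n n ℂ) : Prop :=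
  M.PosSemidef ∧ ((1 : Matrix n n ℂ) - M).PosSemidef

/-- Trace norm of a Hermitian matrix: sum of absolute values of its eigenvalues. -/
def trNorm {n : Type*} [Fintype n] [DecidableEq n] (A : Matrix n n ℂ) : ℝ :=
  if h : A.IsHermitian then ∑ i, |h.eigenvalues i| else 0

/-- Separable states: the convex hull of product density matrices. -/
def SepSet (α β : Type*) [Fintype α] [Fintype β] :
    Set (Matrix (α × β) (α × β) ℂ) :=
  convexHull ℝ {τ | ∃ ρA ρB, IsDensity ρA ∧ IsDensity ρB ∧ τ = ρA ⊗ₖ ρB}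

/-- The loss `L(ρ,σ,M) = (Tr(Mρ) + Tr((I−M)σ))/2`. -/
def lossL {n : Type*} [Fintype n] [DecidableEq n] (ρ σ M : Matrix n n ℂ) : ℂ :=
  ((M * ρ).trace + (((1 : Matrix n n ℂ) - M) * σ).trace) / 2

/-- The discriminator value `max_{0 ≤ M ≤ I} L(ρ,σ,M)` (real part). -/
def maxLoss {n : Type*} [Fintype n] [DecidableEq n] (ρ σ : Matrix n n ℂ) : ℝ :=
  sSup {x : ℝ | ∃ M, IsMeas M ∧ x = (lossL ρ σ M).re}

/-- The GHZ state `(|0…0⟩ + |1…1⟩)/√2` across the bipartition `α | β` of the qubits. -/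
def ghz (α β : Type*) [Fintype α] [Fintype β] [DecidableEq α] [DecidableEq β] :
    ((α → Fin 2) × (β → Fin 2)) → ℂ :=
  fun fg =>
    if fg.1 = (fun _ => 0) ∧ fg.2 = (fun _ => 0) then ((Real.sqrt 2 : ℝ) : ℂ)⁻¹
    else if fg.1 = (fun _ => 1) ∧ fg.2 = (fun _ => 1) then ((Real.sqrt 2 : ℝ) : ℂ)⁻¹
    else 0

lemma psd_diag_re_nonneg {n : Type*} [Fintype n] [DecidableEq n] {M : Matrix n n ℂ}
    (hM : M.PosSemidef) (k : n) : 0 ≤ (M k k).re := by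
  have h := hM.re_dotProduct_nonneg (Pi.single k 1)
  simpa [dotProduct, Matrix.mulVec_single, Pi.single_apply, apply_ite,
    Finset.sum_ite_eq'] using h

lemma psd_diag_im_zero {n : Type*} [Fintype n] [DecidableEq n] {M : Matrix n n ℂ}
    (hM : M.PosSemidef) (k : n) : (M k k).im = 0 := by
  have := hM.isHermitian.apply k k
  have h := congrArg Complex.im this
  simp at h
  linarith

lemma psd_entry_sq {n : Type*} [Fintype n] [DecidableEq n] {M : Matrix n n ℂ}
    (hM : M.PosSemidef) (i j : n) :
    Complex.normSq (M i j) ≤ (M i i).re * (M j j).re := by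
  have hji : M j i = starRingEnd ℂ (M i j) := by
    have := hM.isHermitian.apply j i
    simpa using this.symm
  have key : ∀ b : ℝ, 0 ≤ (M j j).re * (b * b) + (2 * Complex.normSq (M i j)) * b
      + Complex.normSq (M i j) * (M i i).re := by
    intro b
    have h := hM.re_dotProduct_nonneg (Pi.single i (M i j) + Pi.single j (b : ℂ))
    rw [star_add, ← Pi.single_star, ← Pi.single_star, Matrix.mulVec_add,
      Matrix.mulVec_single, Matrix.mulVec_single, add_dotProduct,
      single_dotProduct, single_dotProduct] at h
    simp only [Pi.add_apply, Pi.smul_apply, Matrix.col_apply, op_smul_eq_mul, hji, RCLike.re_to_complex] at h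
    have him_i := psd_diag_im_zero hM i
    have him_j := psd_diag_im_zero hM j
    simp only [Complex.add_re, Complex.mul_re, Complex.mul_im, Complex.add_im,
      Complex.conj_re, Complex.conj_im, Complex.ofReal_re, Complex.ofReal_im,
      Complex.star_def, him_i, him_j] at h
    rw [Complex.normSq_apply]
    nlinarith [h]
  have hd := discrim_le_zero key
  rw [discrim] at hd
  have hn : 0 ≤ Complex.normSq (M i j) := Complex.normSq_nonneg _
  have hi := psd_diag_re_nonneg hM i
  have hj := psd_diag_re_nonneg hM j
  by_cases h0 : Complex.normSq (M i j) = 0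
  · rw [h0]; positivity
  · have hpos : 0 < Complex.normSq (M i j) := lt_of_le_of_ne hn (Ne.symm h0)
    nlinarith [hd, hpos]

lemma trace_vecMulVec_mul {n : Type*} [Fintype n] (v w : n → ℂ) (S : Matrix n n ℂ) :
    (Matrix.vecMulVec v w * S).trace = w ⬝ᵥ (S *ᵥ v) := by
  simp only [Matrix.trace, Matrix.diag_apply, Matrix.mul_apply, Matrix.vecMulVec_apply,
    dotProduct, Matrix.mulVec, Finset.mul_sum]
  rw [Finset.sum_comm]
  refine Finset.sum_congr rfl fun q _ => Finset.sum_congr rfl fun p _ => by ring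


set_option maxHeartbeats 1000000 in
/-- The GHZ witness `W_N = (1/2)I − |G_N⟩⟨G_N|` is nonnegative on all product
states `σ_A ⊗ σ_B` for any bipartition with both parts nonempty. -/
theorem ghz_witness_nonneg_on_products
    {α β : Type*} [Fintype α] [Fintype β] [DecidableEq α] [DecidableEq β]
    [Nonempty α] [Nonempty β]
    (σA : Matrix (α → Fin 2) (α → Fin 2) ℂ) (σB : Matrix (β → Fin 2) (β → Fin 2) ℂ)
    (hA : IsDensity σA) (hB : IsDensity σB) :
    0 ≤ ((((1 / 2 : ℂ) • (1 : Matrix ((α → Fin 2) × (β → Fin 2)) ((α → Fin 2) × (β → Fin 2)) ℂ)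
        - vecMulVec (ghz α β) (star (ghz α β))) * (σA ⊗ₖ σB)).trace).re := by
  set c : ℂ := ((Real.sqrt 2 : ℝ) : ℂ)⁻¹ with hc
  set OA : α → Fin 2 := fun _ => 0 with hOA
  set IA : α → Fin 2 := fun _ => 1 with hIA
  set OB : β → Fin 2 := fun _ => 0 with hOB
  set IB : β → Fin 2 := fun _ => 1 with hIB
  have hA01 : OA ≠ IA := by
    intro h
    have := congrFun h (Classical.arbitrary α)
    simp [hOA, hIA] at this
  have hB01 : OB ≠ IB := by
    intro h
    have := congrFun h (Classical.arbitrary β)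
    simp [hOB, hIB] at this
  set E0 : (α → Fin 2) × (β → Fin 2) := (OA, OB) with hE0
  set E1 : (α → Fin 2) × (β → Fin 2) := (IA, IB) with hE1
  have hE : E0 ≠ E1 := by
    intro h
    exact hA01 (congrArg Prod.fst h)
  have hg : ghz α β = fun p => (if p = E0 then c else 0) + (if p = E1 then c else 0) := by
    funext p
    rcases eq_or_ne p E0 with h0 | h0
    · subst h0
      simp [ghz, hE, hE0, hA01]
      rw [if_pos (show (OA = fun _ => 0) ∧ OB = fun _ => 0 from ⟨rfl, rfl⟩), if_neg hE, add_zero]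
    · rcases eq_or_ne p E1 with h1 | h1
      · subst h1
        simp [ghz, Ne.symm hE, hE1, hA01.symm]
        rw [if_neg (show ¬((IA = fun _ => 0) ∧ IB = fun _ => 0) from fun h => hA01 h.1.symm),
          if_pos (show (IA = fun _ => 1) ∧ IB = fun _ => 1 from ⟨rfl, rfl⟩), if_neg h0, zero_add]
      · have h0' : ¬(p.1 = OA ∧ p.2 = OB) := fun hh => h0 (Prod.ext hh.1 hh.2)
        have h1' : ¬(p.1 = IA ∧ p.2 = IB) := fun hh => h1 (Prod.ext hh.1 hh.2)
        simp [ghz, h0, h1, h0', h1', hOA, hOB, hIA, hIB]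
        exact (if_neg h0').trans (if_neg h1')
  have hstarc : star c = c := by
    rw [hc]
    simp [Complex.star_def, map_inv₀, Complex.conj_ofReal]
  have hgs : star (ghz α β) = ghz α β := by
    funext p
    simp only [Pi.star_apply, hg, star_add, apply_ite (star : ℂ → ℂ), star_zero, hstarc]
  have hg' : ghz α β = Pi.single E0 c + Pi.single E1 c := by
    funext p
    rw [hg]
    simp [Pi.single_apply]
  have htr : (vecMulVec (ghz α β) (star (ghz α β)) * (σA ⊗ₖ σB)).trace
      = c * c * (σA ⊗ₖ σB) E0 E0 + c * c * (σA ⊗ₖ σB) E0 E1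
        + c * c * (σA ⊗ₖ σB) E1 E0 + c * c * (σA ⊗ₖ σB) E1 E1 := by
    rw [hgs, hg', trace_vecMulVec_mul, Matrix.mulVec_add, Matrix.mulVec_single,
      Matrix.mulVec_single, add_dotProduct, single_dotProduct,
      single_dotProduct]
    simp only [Pi.add_apply, Pi.smul_apply, Matrix.col_apply, op_smul_eq_mul]
    ring
  have hcc : c * c = ((1 / 2 : ℝ) : ℂ) := by
    rw [hc, ← mul_inv, ← Complex.ofReal_mul, Real.mul_self_sqrt (by norm_num : (0:ℝ) ≤ 2)]
    norm_num
  rw [sub_mul, Matrix.smul_mul, Matrix.one_mul, Matrix.trace_sub, Matrix.trace_smul,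
    Matrix.trace_kronecker, hA.2, hB.2, htr]
  have h00 : (σA ⊗ₖ σB) E0 E0 = σA OA OA * σB OB OB := rfl
  have h01 : (σA ⊗ₖ σB) E0 E1 = σA OA IA * σB OB IB := rfl
  have h10 : (σA ⊗ₖ σB) E1 E0 = σA IA OA * σB IB OB := rfl
  have h11 : (σA ⊗ₖ σB) E1 E1 = σA IA IA * σB IB IB := rfl
  have hherm : σA IA OA = starRingEnd ℂ (σA OA IA) := by
    have := hA.1.isHermitian.apply IA OA; simpa using this.symm
  have hhermB : σB IB OB = starRingEnd ℂ (σB OB IB) := by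
    have := hB.1.isHermitian.apply IB OB; simpa using this.symm
  -- real facts
  have haA := psd_diag_re_nonneg hA.1 OA
  have hdA := psd_diag_re_nonneg hA.1 IA
  have haB := psd_diag_re_nonneg hB.1 OB
  have hdB := psd_diag_re_nonneg hB.1 IB
  have himaA := psd_diag_im_zero hA.1 OA
  have himdA := psd_diag_im_zero hA.1 IA
  have himaB := psd_diag_im_zero hB.1 OB
  have himdB := psd_diag_im_zero hB.1 IB
  have hx := psd_entry_sq hA.1 OA IA
  have hy := psd_entry_sq hB.1 OB IB
  have hsumA : (σA OA OA).re + (σA IA IA).re ≤ 1 := by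
    have h1 : σA.trace = 1 := hA.2
    have h2 : ∑ f, (σA f f).re = 1 := by
      have := congrArg Complex.re h1
      simpa [Matrix.trace, Matrix.diag_apply, Complex.re_sum] using this
    calc (σA OA OA).re + (σA IA IA).re
        = ∑ f ∈ ({OA, IA} : Finset (α → Fin 2)), (σA f f).re := by
          rw [Finset.sum_pair hA01]
      _ ≤ ∑ f, (σA f f).re := Finset.sum_le_sum_of_subset_of_nonneg
          (Finset.subset_univ _) (fun i _ _ => psd_diag_re_nonneg hA.1 i)
      _ = 1 := h2
  have hsumB : (σB OB OB).re + (σB IB IB).re ≤ 1 := by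
    have h1 : σB.trace = 1 := hB.2
    have h2 : ∑ g, (σB g g).re = 1 := by
      have := congrArg Complex.re h1
      simpa [Matrix.trace, Matrix.diag_apply, Complex.re_sum] using this
    calc (σB OB OB).re + (σB IB IB).re
        = ∑ g ∈ ({OB, IB} : Finset (β → Fin 2)), (σB g g).re := by
          rw [Finset.sum_pair hB01]
      _ ≤ ∑ g, (σB g g).re := Finset.sum_le_sum_of_subset_of_nonneg
          (Finset.subset_univ _) (fun i _ _ => psd_diag_re_nonneg hB.1 i)
      _ = 1 := h2
  -- the cross term bound
  set x := σA OA IA with hxdef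
  set y := σB OB IB with hydef
  have hre : (x * y).re ≤ ‖x‖ * ‖y‖ := by
    calc (x * y).re ≤ ‖x * y‖ := Complex.re_le_norm _
      _ = ‖x‖ * ‖y‖ := norm_mul _ _
  have hax : (‖x‖) ^ 2 ≤ (σA OA OA).re * (σA IA IA).re := by
    rw [Complex.sq_norm]; exact hx
  have hay : (‖y‖) ^ 2 ≤ (σB OB OB).re * (σB IB IB).re := by
    rw [Complex.sq_norm]; exact hy
  have habsx := norm_nonneg x
  have habsy := norm_nonneg y
  -- now compute the real part
  rw [h00, h01, h10, h11, hherm, hhermB, hcc]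
  simp only [smul_eq_mul, mul_one]
  simp only [Complex.sub_re, Complex.mul_re, Complex.mul_im, Complex.add_re, Complex.add_im,
    Complex.ofReal_re, Complex.ofReal_im, Complex.one_re, Complex.one_im,
    Complex.conj_re, Complex.conj_im, himaA, himdA, himaB, himdB, ← hxdef, ← hydef]
  have hrexy : x.re * y.re - x.im * y.im ≤ ‖x‖ * ‖y‖ := by
    have : (x * y).re = x.re * y.re - x.im * y.im := Complex.mul_re x y
    linarith [hre, this.symm.le]
  have huv : (‖x‖ * ‖y‖) ^ 2
      ≤ ((σA OA OA).re * (σA IA IA).re) * ((σB OB OB).re * (σB IB IB).re) := by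
    rw [mul_pow]
    exact mul_le_mul hax hay (sq_nonneg _) (by positivity)
  have h2uv : 2 * (‖x‖ * ‖y‖)
      ≤ (σA OA OA).re * (σB IB IB).re + (σA IA IA).re * (σB OB OB).re := by
    nlinarith [huv, sq_nonneg ((σA OA OA).re * (σB IB IB).re - (σA IA IA).re * (σB OB OB).re),
      mul_nonneg habsx habsy, mul_nonneg haA hdB, mul_nonneg hdA haB]
  have hmul : ((σA OA OA).re + (σA IA IA).re) * ((σB OB OB).re + (σB IB IB).re) ≤ 1 := by
    nlinarith [hsumA, hsumB, haA, hdA, haB, hdB]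
  have hhalf : ((1 : ℂ) / 2).re = 1 / 2 := by norm_num
  rw [hhalf]
  nlinarith [hrexy, h2uv, hmul, mul_nonneg habsx habsy]
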